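/- Let R be a commutative ring that is not an integral domain (there exist nonzero x, y with xy = 0), and let A = R × R with the exchange involution (x,y)* = (y,x). Then Γ'(A) is connected. -/

import Mathlib

/-- The nonzero zero-divisors of `R × R`. -/
def ZstarProd (R : Type*) [CommRing R] : Set (R × R) :=
  {a | a ≠ 0 ∧ ∃ b : R × R, b ≠ 0 ∧ (a * b = 0 ∨ b * a = 0)}

/-- The generalized zero-divisor graph Γ'(R × R), with the exchange involution
`(x, y)* = (y, x)`. -/
def gammaPProd (R : Type*) [CommRing R] : SimpleGraph (ZstarProd R) where
  Adj a b := a ≠ b ∧ ∃ n : ℕ, 0 < n ∧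
      ((a : R × R) ^ n * (b : R × R).swap = 0 ∨ (b : R × R) ^ n * (a : R × R).swap = 0)
  symm := by
    constructor
    rintro a b ⟨hne, n, hn, h⟩
    exact ⟨hne.symm, n, hn, h.symm⟩
  loopless := by constructor; rintro a ⟨hne, -⟩; exact hne rfl

lemma gammaPProd_adj_of {R : Type*} [CommRing R] (p q : ZstarProd R)
    (hne : (p : R × R) ≠ (q : R × R)) (h : (p : R × R) * (q : R × R).swap = 0) :
    (gammaPProd R).Adj p q := by
  refine ⟨fun hh => hne (congrArg Subtype.val hh), 1, one_pos, Or.inl ?_⟩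
  simpa using h

/-- If `R` is a commutative ring that is not an integral domain, then Γ'(R × R)
(with exchange involution) is connected. -/
theorem stmt_19 {R : Type*} [CommRing R]
    (h : ∃ x y : R, x ≠ 0 ∧ y ≠ 0 ∧ x * y = 0) :
    (gammaPProd R).Connected := by
  obtain ⟨x, y, hx, hy, hxy⟩ := h
  have hyx : y * x = 0 := by rw [mul_comm]; exact hxy
  -- The three special vertices
  have hu : ((y, y) : R × R) ∈ ZstarProd R := by
    refine ⟨by simp [Prod.ext_iff, hy], (x, x), by simp [Prod.ext_iff, hx],
      Or.inl ?_⟩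
    simp [Prod.ext_iff, hyx]
  have hv : ((x, 0) : R × R) ∈ ZstarProd R := by
    refine ⟨by simp [Prod.ext_iff, hx], (y, 0), by simp [Prod.ext_iff, hy],
      Or.inl ?_⟩
    simp [Prod.ext_iff, hxy]
  have hw : ((0, x) : R × R) ∈ ZstarProd R := by
    refine ⟨by simp [Prod.ext_iff, hx], (0, y), by simp [Prod.ext_iff, hy],
      Or.inl ?_⟩
    simp [Prod.ext_iff, hxy]
  set u : ZstarProd R := ⟨(y, y), hu⟩ with hu'
  set v : ZstarProd R := ⟨(x, 0), hv⟩ with hv'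
  set w : ZstarProd R := ⟨(0, x), hw⟩ with hw'
  -- v and w are adjacent to u
  have hvu : (gammaPProd R).Adj v u := by
    refine gammaPProd_adj_of v u (fun hh => hy ((Prod.ext_iff.1 hh).2.symm)) ?_
    simp [Prod.ext_iff, hxy, hv', hu']
  have hwu : (gammaPProd R).Adj w u := by
    refine gammaPProd_adj_of w u (fun hh => hy ((Prod.ext_iff.1 hh).1.symm)) ?_
    simp [Prod.ext_iff, hxy, hw', hu']
  -- anything of the form (a, 0) is adjacent or equal to v
  have reach_v : ∀ (p : ZstarProd R), (p : R × R).2 = 0 → (gammaPProd R).Reachable p v := by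
    intro p hp2
    by_cases hpv : (p : R × R) = (v : R × R)
    · exact (Subtype.ext hpv : p = v) ▸ SimpleGraph.Reachable.refl _
    · refine (gammaPProd_adj_of p v hpv ?_).reachable
      have : (p : R × R) = ((p : R × R).1, 0) := by
        ext <;> simp [hp2]
      rw [this]
      simp [Prod.ext_iff, hv']
  have reach_w : ∀ (p : ZstarProd R), (p : R × R).1 = 0 → (gammaPProd R).Reachable p w := by
    intro p hp1
    by_cases hpw : (p : R × R) = (w : R × R)
    · exact (Subtype.ext hpw : p = w) ▸ SimpleGraph.Reachable.refl _
    · refine (gammaPProd_adj_of p w hpw ?_).reachable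
      have : (p : R × R) = (0, (p : R × R).2) := by
        ext <;> simp [hp1]
      rw [this]
      simp [Prod.ext_iff, hw']
  -- every vertex reaches u
  have reach : ∀ p : ZstarProd R, (gammaPProd R).Reachable p u := by
    intro p
    obtain ⟨hp0, b, hb0, hprod⟩ := p.2
    have hab : (p : R × R) * b = 0 := by
      rcases hprod with h1 | h1
      · exact h1
      · rw [mul_comm]; exact h1
    by_cases hp1 : (p : R × R).1 = 0
    · exact (reach_w p hp1).trans hwu.reachable
    by_cases hp2 : (p : R × R).2 = 0
    · exact (reach_v p hp2).trans hvu.reachable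
    -- mixed case: both coordinates nonzero
    have hc : (p : R × R).1 * b.1 = 0 := congrArg Prod.fst hab
    have hd : (p : R × R).2 * b.2 = 0 := congrArg Prod.snd hab
    by_cases hb1 : b.1 = 0
    · -- b.2 ≠ 0; p adjacent to (b.2, 0)
      have hb2 : b.2 ≠ 0 := by
        intro hb2; exact hb0 (by ext <;> simp [hb1, hb2])
      have hmem : ((b.2, 0) : R × R) ∈ ZstarProd R := by
        refine ⟨by simp [Prod.ext_iff, hb2], (0, (p : R × R).2),
          by simp [Prod.ext_iff, hp2], Or.inl ?_⟩
        simp [Prod.ext_iff]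
      set q : ZstarProd R := ⟨(b.2, 0), hmem⟩ with hq'
      have hadj : (gammaPProd R).Adj p q := by
        refine gammaPProd_adj_of p q (fun hh => hp2 (by simpa using congrArg Prod.snd hh)) ?_
        have : ((q : R × R)).swap = (0, b.2) := rfl
        rw [this]
        ext
        · simp
        · simpa using hd
      exact hadj.reachable.trans ((reach_v q rfl).trans hvu.reachable)
    · -- b.1 ≠ 0; p adjacent to (0, b.1)
      have hmem : ((0, b.1) : R × R) ∈ ZstarProd R := by
        refine ⟨by simp [Prod.ext_iff, hb1], ((p : R × R).1, 0),
          by simp [Prod.ext_iff, hp1], Or.inl ?_⟩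
        simp [Prod.ext_iff]
      set q : ZstarProd R := ⟨(0, b.1), hmem⟩ with hq'
      have hadj : (gammaPProd R).Adj p q := by
        refine gammaPProd_adj_of p q (fun hh => hp1 (by simpa using congrArg Prod.fst hh)) ?_
        have : ((q : R × R)).swap = (b.1, 0) := rfl
        rw [this]
        ext
        · simpa using hc
        · simp
      exact hadj.reachable.trans ((reach_w q rfl).trans hwu.reachable)
  haveI : Nonempty (ZstarProd R) := ⟨u⟩
  exact SimpleGraph.Connected.mk (fun a b => (reach a).trans (reach b).symm)
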